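/- For every ε ∈ [0,1], the function F(s) = s·ln(1 + (e^{1/s} − 1)·ε) is nonincreasing on (0,∞) and F(s) → ε as s → ∞. (Lemma used in the proof of Proposition 1, established via the Lyapunov moment inequality.) -/

import Mathlib

open Real Filter

/-- Weighted power-mean inequality for two points. -/
lemma aux_rpow_mean (ε x p : ℝ) (hε0 : 0 ≤ ε) (hε1 : ε ≤ 1) (hx : 0 ≤ x) (hp : 1 ≤ p) :
    (ε * x + (1 - ε)) ^ p ≤ ε * x ^ p + (1 - ε) := by
  have h1ε : (0:ℝ) ≤ 1 - ε := by linarith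
  have := NNReal.rpow_arith_mean_le_arith_mean2_rpow ⟨ε, hε0⟩ ⟨1 - ε, h1ε⟩ ⟨x, hx⟩ 1 (by
    ext; exact add_sub_cancel ε 1) hp
  have h := (NNReal.coe_le_coe).2 this
  have h' : (ε * x + (1 - ε) * 1) ^ p ≤ ε * x ^ p + (1 - ε) * 1 ^ p := h
  simpa using h'

theorem stmt_10 (e : ℝ) (he : e ∈ Set.Icc (0 : ℝ) 1) :
    AntitoneOn (fun s : ℝ => s * Real.log (1 + (Real.exp (1 / s) - 1) * e)) (Set.Ioi 0) ∧
    Tendsto (fun s : ℝ => s * Real.log (1 + (Real.exp (1 / s) - 1) * e))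
      atTop (nhds e) := by
  obtain ⟨he0, he1⟩ := he
  constructor
  · intro a ha b hb hab
    simp only [Set.mem_Ioi] at ha hb
    have hb0 : (0:ℝ) < b := hb
    set x := Real.exp (1 / b) with hxdef
    have hx1 : (1:ℝ) ≤ x := Real.one_le_exp (by positivity)
    have hp : (1:ℝ) ≤ b / a := (one_le_div ha).2 hab
    have key : (e * x + (1 - e)) ^ (b / a) ≤ e * x ^ (b / a) + (1 - e) :=
      aux_rpow_mean e x (b / a) he0 he1 (by linarith) hp
    have hxp : x ^ (b / a) = Real.exp (1 / a) := by
      rw [hxdef, ← Real.exp_mul]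
      congr 1
      field_simp
    rw [hxp] at key
    have hB : (1:ℝ) ≤ e * x + (1 - e) := by nlinarith
    have hB0 : (0:ℝ) < e * x + (1 - e) := by linarith
    have hB20 : (0:ℝ) < (e * x + (1 - e)) ^ (b / a) := Real.rpow_pos_of_pos hB0 _
    have hlog := Real.log_le_log hB20 key
    rw [Real.log_rpow hB0] at hlog
    have hgoal : b * Real.log (e * x + (1 - e)) ≤ a * Real.log (e * Real.exp (1 / a) + (1 - e)) := by
      have := mul_le_mul_of_nonneg_left hlog ha.le
      calc b * Real.log (e * x + (1 - e)) = a * (b / a * Real.log (e * x + (1 - e))) := by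
            field_simp
        _ ≤ a * Real.log (e * Real.exp (1 / a) + (1 - e)) := this
    have e1 : 1 + (Real.exp (1 / b) - 1) * e = e * x + (1 - e) := by rw [hxdef]; ring
    have e2 : 1 + (Real.exp (1 / a) - 1) * e = e * Real.exp (1 / a) + (1 - e) := by ring
    simp only []
    rw [e1, e2]; exact hgoal
  · -- limit part
    have hd : HasDerivAt (fun u : ℝ => Real.log (1 + (Real.exp u - 1) * e)) e 0 := by
      have h1 : HasDerivAt (fun u : ℝ => 1 + (Real.exp u - 1) * e) e 0 := by
        have := (((Real.hasDerivAt_exp 0).sub_const 1).mul_const e).const_add 1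
        simpa using this
      have h2 := h1.log (by simp)
      simpa using h2
    have hslope := hasDerivAt_iff_tendsto_slope.1 hd
    have hinv : Tendsto (fun s : ℝ => 1 / s) atTop (nhdsWithin (0:ℝ) {(0:ℝ)}ᶜ) := by
      apply tendsto_nhdsWithin_of_tendsto_nhds_of_eventually_within
      · simpa using tendsto_inv_atTop_zero
      · filter_upwards [eventually_gt_atTop (0:ℝ)] with s hs
        simp [hs.ne']
    have hcomp := hslope.comp hinv
    apply hcomp.congr'
    filter_upwards [eventually_gt_atTop (0:ℝ)] with s hs
    have hs0 : s ≠ 0 := ne_of_gt hs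
    simp only [Function.comp_apply]
    rw [slope_def_field]
    simp only [Real.exp_zero, sub_self, zero_mul, add_zero, Real.log_one, sub_zero]
    rw [div_eq_mul_inv, one_div, inv_inv, mul_comm]
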